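/- Let V be a finite set of points in the Euclidean plane ℝ², let T be a minimum spanning tree of V whose edge lengths are pairwise distinct, and let N ⊆ V be a nonempty subset with |N| = k. Let B_N = { e_{xy} : x, y ∈ N, x ≠ y } be the set of bottleneck edges of pairs of N. Then: (i) B_N has exactly k − 1 elements; (ii) deleting the edges of B_N from T yields a spanning forest of V with exactly k connected components, each containing exactly one point of N; and (iii) this forest has minimum total length among all spanning forests of the complete Euclidean graph on V that have exactly k components, each containing exactly one point of N. -/

import Mathlib

open scoped BigOperators

noncomputable section

/-- The Euclidean plane. -/
abbrev Pt : Type := EuclideanSpace ℝ (Fin 2)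

/-- The length of an edge (an unordered pair of points): the Euclidean
distance between its endpoints. -/
def edgeLen : Sym2 Pt → ℝ :=
  Sym2.lift ⟨fun a b => dist a b, fun a b => dist_comm a b⟩

/-- The total length of a graph on the plane: the sum of the Euclidean
lengths of its edges. -/
def glength (G : SimpleGraph Pt) : ℝ := ∑ᶠ e ∈ G.edgeSet, edgeLen e

/-- `G` is a spanning tree of the point set `V`: all its edges join points of
`V`, it is acyclic, and all points of `V` are pairwise connected in `G`. -/
def IsSpanningTreeOn (V : Set Pt) (G : SimpleGraph Pt) : Prop :=
  (∀ ⦃x y : Pt⦄, G.Adj x y → x ∈ V ∧ y ∈ V) ∧ G.IsAcyclic ∧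
    ∀ x ∈ V, ∀ y ∈ V, G.Reachable x y

/-- `G` is a minimum spanning tree of the point set `V`. -/
def IsMSTOn (V : Set Pt) (G : SimpleGraph Pt) : Prop :=
  IsSpanningTreeOn V G ∧
    ∀ H : SimpleGraph Pt, IsSpanningTreeOn V H → glength G ≤ glength H

/-- The edges of `T` have pairwise distinct lengths. -/
def DistinctEdgeLengths (T : SimpleGraph Pt) : Prop :=
  ∀ e ∈ T.edgeSet, ∀ f ∈ T.edgeSet, edgeLen e = edgeLen f → e = f

/-- `e` is the (unique) edge of maximum length on the (unique) path in `T`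
from `x` to `y`: it is an edge of `T` lying on every path from `x` to `y`,
and on every such path its length is maximal. -/
def BottleneckEdge (T : SimpleGraph Pt) (x y : Pt) (e : Sym2 Pt) : Prop :=
  e ∈ T.edgeSet ∧
    ∀ p : T.Walk x y, p.IsPath → e ∈ p.edges ∧ ∀ f ∈ p.edges, edgeLen f ≤ edgeLen e

namespace SimpleGraph
universe u
variable {α : Type u}


lemma walk_split {G : SimpleGraph α} {a b p q : α} (w : G.Walk a b) (hw : w.IsPath)
    (h : s(p, q) ∈ w.edges) :
    (∃ (w1 : G.Walk a p) (w2 : G.Walk q b),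
       (s(p,q) ∉ w1.edges ∧ ∀ e ∈ w1.edges, e ∈ w.edges) ∧
       (s(p,q) ∉ w2.edges ∧ ∀ e ∈ w2.edges, e ∈ w.edges)) ∨
    (∃ (w1 : G.Walk a q) (w2 : G.Walk p b),
       (s(p,q) ∉ w1.edges ∧ ∀ e ∈ w1.edges, e ∈ w.edges) ∧
       (s(p,q) ∉ w2.edges ∧ ∀ e ∈ w2.edges, e ∈ w.edges)) := by
  induction w with
  | nil => simp at h
  | @cons a c b hadj w ih =>
    rw [Walk.cons_isPath_iff] at hw
    rw [Walk.edges_cons, List.mem_cons] at h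
    have hnot : s(p,q) ∉ w.edges ∨ s(p,q) ≠ s(a,c) := by
      by_cases hmem : s(p,q) ∈ w.edges
      · right
        intro hEq
        exact hw.2 (Walk.fst_mem_support_of_mem_edges w (hEq ▸ hmem))
      · left; exact hmem
    rcases h with h1 | h2
    · rcases Sym2.eq_iff.1 h1 with ⟨rfl, rfl⟩ | ⟨rfl, rfl⟩
      · left
        refine ⟨Walk.nil, w, ⟨by simp, by simp⟩, ⟨?_, fun e he => by simp [he]⟩⟩
        intro hmem
        exact hw.2 (Walk.fst_mem_support_of_mem_edges w (h1 ▸ hmem))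
      · right
        refine ⟨Walk.nil, w, ⟨by simp, by simp⟩, ⟨?_, fun e he => by simp [he]⟩⟩
        intro hmem
        exact hw.2 (Walk.fst_mem_support_of_mem_edges w (by rwa [Sym2.eq_swap] at hmem))
    · have hne : s(p,q) ≠ s(a,c) := by
        intro hEq
        exact hw.2 (Walk.fst_mem_support_of_mem_edges w (hEq ▸ h2))
      rcases ih hw.1 h2 with ⟨w1, w2, ⟨e1, s1⟩, ⟨e2, s2⟩⟩ | ⟨w1, w2, ⟨e1, s1⟩, ⟨e2, s2⟩⟩
      · left
        refine ⟨Walk.cons hadj w1, w2, ⟨?_, ?_⟩, ⟨e2, fun e he => by simp [s2 e he]⟩⟩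
        · rw [Walk.edges_cons, List.mem_cons]
          rintro (h | h)
          exacts [hne h, e1 h]
        · intro e he
          rw [Walk.edges_cons, List.mem_cons] at he ⊢
          rcases he with h | h
          exacts [Or.inl h, Or.inr (s1 e h)]
      · right
        refine ⟨Walk.cons hadj w1, w2, ⟨?_, ?_⟩, ⟨e2, fun e he => by simp [s2 e he]⟩⟩
        · rw [Walk.edges_cons, List.mem_cons]
          rintro (h | h)
          exacts [hne h, e1 h]
        · intro e he
          rw [Walk.edges_cons, List.mem_cons] at he ⊢
          rcases he with h | h
          exacts [Or.inl h, Or.inr (s1 e h)]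

lemma exists_crossing_edge {G K : SimpleGraph α} {a b : α} (w : G.Walk a b)
    (hK : ¬ K.Reachable a b) :
    ∃ p q, s(p, q) ∈ w.edges ∧ K.Reachable a p ∧ ¬ K.Reachable a q := by
  induction w with
  | nil => exact absurd (Reachable.refl _) hK
  | @cons a c b hadj w ih =>
    by_cases hc : K.Reachable a c
    · have : ¬ K.Reachable c b := fun hr => hK (hc.trans hr)
      obtain ⟨p, q, h1, h2, h3⟩ := ih this
      exact ⟨p, q, by simp [h1], hc.trans h2, fun h => h3 (hc.symm.trans h)⟩
    · exact ⟨a, c, by simp, Reachable.refl _, hc⟩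

lemma acyclic_mono {G H : SimpleGraph α} (hle : G ≤ H) (hH : H.IsAcyclic) : G.IsAcyclic := by
  intro v c hc
  have hsub : ∀ e ∈ c.edges, e ∈ H.edgeSet :=
    fun e he => edgeSet_subset_edgeSet.2 hle (c.edges_subset_edgeSet he)
  exact hH (c.transfer H hsub) (hc.transfer hsub)

lemma not_reachable_delete_of_acyclic {G : SimpleGraph α} (hG : G.IsAcyclic) {u v : α}
    (hadj : G.Adj u v) : ¬ (G.deleteEdges {s(u,v)}).Reachable u v := by
  intro hr
  obtain ⟨w, c, hc, -⟩ := (adj_and_reachable_delete_edges_iff_exists_cycle).1 ⟨hadj, hr⟩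
  exact hG c hc

lemma acyclic_insert_edge {G : SimpleGraph α} (hG : G.IsAcyclic) {p q : α}
    (hne : p ≠ q) (hpq : ¬ G.Reachable p q) :
    (fromEdgeSet (insert s(p, q) G.edgeSet)).IsAcyclic := by
  intro v c hc
  by_cases he : s(p,q) ∈ c.edges
  · have h2 := (adj_and_reachable_delete_edges_iff_exists_cycle).2 ⟨v, c, hc, he⟩
    refine hpq (h2.2.mono ?_)
    rw [← edgeSet_subset_edgeSet]
    intro e hee
    rw [edgeSet_deleteEdges, edgeSet_fromEdgeSet, Set.mem_diff] at hee
    obtain ⟨⟨h3, h4⟩, h5⟩ := hee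
    rcases Set.mem_insert_iff.1 h3 with rfl | h6
    · exact absurd (Set.mem_singleton _) h5
    · exact h6
  · have hsub : ∀ e ∈ c.edges, e ∈ G.edgeSet := by
      intro e hee
      have := c.edges_subset_edgeSet hee
      rw [edgeSet_fromEdgeSet, Set.mem_diff] at this
      rcases Set.mem_insert_iff.1 this.1 with rfl | h6
      · exact absurd hee he
      · exact h6
    exact hG (c.transfer G hsub) (hc.transfer hsub)

lemma reachable_delete_cases (G : SimpleGraph α) {a b v x : α} (h : G.Reachable v x) :
    (G.deleteEdges {s(a,b)}).Reachable v x ∨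
    ((G.deleteEdges {s(a,b)}).Reachable v a ∧ (G.deleteEdges {s(a,b)}).Reachable b x) ∨
    ((G.deleteEdges {s(a,b)}).Reachable v b ∧ (G.deleteEdges {s(a,b)}).Reachable a x) := by
  classical
  obtain ⟨w0⟩ := h
  have hwp : w0.bypass.IsPath := w0.bypass_isPath
  by_cases he : s(a,b) ∈ w0.bypass.edges
  · rcases walk_split w0.bypass hwp he with ⟨w1, w2, ⟨h1e, _⟩, ⟨h2e, _⟩⟩ | ⟨w1, w2, ⟨h1e, _⟩, ⟨h2e, _⟩⟩
    · refine Or.inr (Or.inl ⟨⟨w1.toDeleteEdges {s(a,b)} ?_⟩, ⟨w2.toDeleteEdges {s(a,b)} ?_⟩⟩)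
      · intro e hee hmem
        rw [Set.mem_singleton_iff] at hmem
        exact h1e (hmem ▸ hee)
      · intro e hee hmem
        rw [Set.mem_singleton_iff] at hmem
        exact h2e (hmem ▸ hee)
    · refine Or.inr (Or.inr ⟨⟨w1.toDeleteEdges {s(a,b)} ?_⟩, ⟨w2.toDeleteEdges {s(a,b)} ?_⟩⟩)
      · intro e hee hmem
        rw [Set.mem_singleton_iff] at hmem
        exact h1e (hmem ▸ hee)
      · intro e hee hmem
        rw [Set.mem_singleton_iff] at hmem
        exact h2e (hmem ▸ hee)
  · refine Or.inl ⟨w0.bypass.toDeleteEdges {s(a,b)} ?_⟩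
    intro e hee hmem
    rw [Set.mem_singleton_iff] at hmem
    exact he (hmem ▸ hee)


lemma edgeSet_finite_of_mem {G : SimpleGraph α} {V : Finset α}
    (h : ∀ ⦃x y⦄, G.Adj x y → x ∈ V ∧ y ∈ V) : G.edgeSet.Finite := by
  apply Set.Finite.subset
    (Set.Finite.image (fun p : α × α => s(p.1, p.2)) ((V.finite_toSet).prod V.finite_toSet))
  intro e he
  induction e with
  | _ x y =>
    rw [mem_edgeSet] at he
    exact ⟨(x, y), ⟨(h he).1, (h he).2⟩, rfl⟩

lemma forest_count (V : Finset α) :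
    ∀ (n : ℕ) (G : SimpleGraph α) (N : Finset α), G.IsAcyclic →
    (∀ ⦃x y⦄, G.Adj x y → x ∈ V ∧ y ∈ V) → N ⊆ V →
    (∀ v ∈ V, ∃ x ∈ N, G.Reachable v x) →
    (∀ x ∈ N, ∀ y ∈ N, G.Reachable x y → x = y) →
    G.edgeSet.ncard = n →
    G.edgeSet.ncard + N.card = V.card := by
  classical
  intro n
  induction n with
  | zero =>
    intro G N hac hV hNV h1 h2 hn
    have hfin := edgeSet_finite_of_mem hV
    have hbot : G = ⊥ := by
      rw [← edgeSet_eq_empty]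
      exact (Set.ncard_eq_zero hfin).1 hn
    subst hbot
    have hVN : (V : Finset α) = N := by
      apply Finset.Subset.antisymm _ hNV
      intro v hv
      obtain ⟨x, hx, hr⟩ := h1 v hv
      rwa [reachable_bot.1 hr]
    rw [hn, hVN]
    omega
  | succ n ih =>
    intro G N hac hV hNV h1 h2 hn
    have hfin := edgeSet_finite_of_mem hV
    have hne : G.edgeSet.Nonempty := by
      rw [Set.nonempty_iff_ne_empty]
      intro h
      rw [h] at hn; simp at hn
    obtain ⟨e, he⟩ := hne
    induction e with
    | _ a b =>
    have hadj : G.Adj a b := he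
    set G' := G.deleteEdges {s(a,b)} with hG'
    have hE' : G'.edgeSet = G.edgeSet \ {s(a,b)} := edgeSet_deleteEdges _
    have hn' : G'.edgeSet.ncard = n := by
      rw [hE', Set.ncard_diff_singleton_of_mem he, hn]
      omega
    have hle : G' ≤ G := deleteEdges_le _
    have hnr : ¬ G'.Reachable a b := not_reachable_delete_of_acyclic hac hadj
    have haV : a ∈ V := (hV hadj).1
    have hbV : b ∈ V := (hV hadj).2
    obtain ⟨x₁, hx₁N, hax₁⟩ := h1 a haV
    obtain ⟨d, d', hsym, hd'x₁⟩ :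
        ∃ d d' : α, s(d, d') = s(a, b) ∧ G'.Reachable d' x₁ := by
      rcases reachable_delete_cases G (a := a) (b := b) hax₁ with h | ⟨_, h⟩ | ⟨h, _⟩
      · exact ⟨b, a, Sym2.eq_swap, h⟩
      · exact ⟨a, b, rfl, h⟩
      · exact absurd h hnr
    have hab : (d = a ∧ d' = b) ∨ (d = b ∧ d' = a) := Sym2.eq_iff.mp hsym
    have hadj' : G.Adj d d' := by
      rw [← mem_edgeSet, hsym]; exact he
    have hnr' : ¬ G'.Reachable d d' := by
      rcases hab with ⟨rfl, rfl⟩ | ⟨rfl, rfl⟩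
      · exact hnr
      · exact fun h => hnr h.symm
    have hdV : d ∈ V := (hV hadj').1
    have hd'V : d' ∈ V := (hV hadj').2
    have hdless : ∀ z ∈ N, ¬ G'.Reachable d z := by
      intro z hz hreach
      have hzx₁ : G.Reachable z x₁ :=
        ((hreach.mono hle).symm.trans (hadj'.reachable.trans (hd'x₁.mono hle)))
      have hzeq : z = x₁ := h2 z hz x₁ hx₁N hzx₁
      subst hzeq
      exact hnr' (hreach.trans hd'x₁.symm)
    have hdnotN : d ∉ N := fun hdN => hdless d hdN (Reachable.refl _)
    set N' : Finset α := insert d N with hN'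
    have hN'card : N'.card = N.card + 1 := Finset.card_insert_of_notMem hdnotN
    have hN'V : N' ⊆ V := Finset.insert_subset hdV hNV
    have hreach_a : ∃ x ∈ N', G'.Reachable a x := by
      rcases hab with ⟨rfl, rfl⟩ | ⟨rfl, rfl⟩
      · exact ⟨d, Finset.mem_insert_self _ _, Reachable.refl _⟩
      · exact ⟨x₁, Finset.mem_insert_of_mem hx₁N, hd'x₁⟩
    have hreach_b : ∃ x ∈ N', G'.Reachable b x := by
      rcases hab with ⟨rfl, rfl⟩ | ⟨rfl, rfl⟩
      · exact ⟨x₁, Finset.mem_insert_of_mem hx₁N, hd'x₁⟩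
      · exact ⟨d, Finset.mem_insert_self _ _, Reachable.refl _⟩
    have h1' : ∀ v ∈ V, ∃ x ∈ N', G'.Reachable v x := by
      intro v hv
      obtain ⟨x, hxN, hvx⟩ := h1 v hv
      rcases reachable_delete_cases G (a := a) (b := b) hvx with h | ⟨h, _⟩ | ⟨h, _⟩
      · exact ⟨x, Finset.mem_insert_of_mem hxN, h⟩
      · obtain ⟨xa, hxa, hra⟩ := hreach_a
        exact ⟨xa, hxa, h.trans hra⟩
      · obtain ⟨xb, hxb, hrb⟩ := hreach_b
        exact ⟨xb, hxb, h.trans hrb⟩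
    have h2' : ∀ x ∈ N', ∀ y ∈ N', G'.Reachable x y → x = y := by
      intro x hx y hy hr
      rcases Finset.mem_insert.1 hx with rfl | hxN
      · rcases Finset.mem_insert.1 hy with rfl | hyN
        · rfl
        · exact absurd hr (hdless y hyN)
      · rcases Finset.mem_insert.1 hy with rfl | hyN
        · exact absurd hr.symm (hdless x hxN)
        · exact h2 x hxN y hyN (hr.mono hle)
    have hac' : G'.IsAcyclic := acyclic_mono hle hac
    have hV' : ∀ ⦃x y⦄, G'.Adj x y → x ∈ V ∧ y ∈ V := fun x y hxy => hV (hle hxy)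
    have := ih G' N' hac' hV' hN'V h1' h2' hn'
    rw [hn', hN'card] at this
    rw [hn]
    omega

end SimpleGraph
namespace MSTAux
open SimpleGraph

lemma edgeLen_mk (x y : Pt) : edgeLen s(x, y) = dist x y := rfl

lemma edgeLen_pos {G : SimpleGraph Pt} {e : Sym2 Pt} (he : e ∈ G.edgeSet) : 0 < edgeLen e := by
  induction e with
  | _ x y =>
    rw [SimpleGraph.mem_edgeSet] at he
    rw [edgeLen_mk]
    exact dist_pos.2 he.ne

/-- The canonical path between two reachable vertices. -/
def thePath (G : SimpleGraph Pt) {x y : Pt} (h : G.Reachable x y) : G.Walk x y :=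
  letI := Classical.decEq Pt
  h.some.bypass

lemma thePath_isPath (G : SimpleGraph Pt) {x y : Pt} (h : G.Reachable x y) :
    (thePath G h).IsPath :=
  letI := Classical.decEq Pt
  SimpleGraph.Walk.bypass_isPath _

lemma path_eq_thePath {G : SimpleGraph Pt} (hac : G.IsAcyclic) {x y : Pt} (h : G.Reachable x y)
    (p : G.Walk x y) (hp : p.IsPath) : p = thePath G h := by
  have := hac.path_unique ⟨p, hp⟩ ⟨thePath G h, thePath_isPath G h⟩
  exact congrArg Subtype.val this

lemma glength_eq_sum {G : SimpleGraph Pt} (h : G.edgeSet.Finite) :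
    glength G = ∑ e ∈ h.toFinset, edgeLen e :=
  finsum_mem_eq_finite_toFinset_sum _ h

lemma edgeSet_fromEdgeSet_of_nodiag {s : Set (Sym2 Pt)} (h : ∀ e ∈ s, ¬ e.IsDiag) :
    (SimpleGraph.fromEdgeSet s).edgeSet = s := by
  rw [SimpleGraph.edgeSet_fromEdgeSet]
  ext e
  simp only [Set.mem_diff, Set.mem_setOf_eq, and_iff_left_iff_imp]
  exact fun he => h e he

lemma glength_swap {G : SimpleGraph Pt} (hfin : G.edgeSet.Finite) {e f : Sym2 Pt}
    (he : e ∈ G.edgeSet) (hf : f ∉ G.edgeSet) (hfd : ¬ f.IsDiag) :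
    glength (SimpleGraph.fromEdgeSet (insert f (G.edgeSet \ {e})))
      = glength G - edgeLen e + edgeLen f := by
  classical
  have hE : (SimpleGraph.fromEdgeSet (insert f (G.edgeSet \ {e}))).edgeSet
      = insert f (G.edgeSet \ {e}) := by
    apply edgeSet_fromEdgeSet_of_nodiag
    intro x hx
    rcases Set.mem_insert_iff.1 hx with rfl | hx
    · exact hfd
    · exact G.not_isDiag_of_mem_edgeSet hx.1
  have hfin2 : (insert f (G.edgeSet \ {e})).Finite := ((hfin.diff).insert f)
  rw [glength, glength, hE, finsum_mem_eq_finite_toFinset_sum _ hfin2,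
    finsum_mem_eq_finite_toFinset_sum _ hfin]
  have htf : hfin2.toFinset = insert f (hfin.toFinset.erase e) := by
    ext x
    simp only [Set.Finite.mem_toFinset, Set.mem_insert_iff, Set.mem_diff, Set.mem_singleton_iff,
      Finset.mem_insert, Finset.mem_erase]
    tauto
  rw [htf, Finset.sum_insert (by simp [hf]), Finset.sum_erase_eq_sub (by simp [he])]
  ring

lemma cycle_property {V : Finset Pt} {T : SimpleGraph Pt} (hT : IsMSTOn ↑V T)
    {u v : Pt} (hu : u ∈ V) (hv : v ∈ V) (huv : u ≠ v) (he : s(u,v) ∉ T.edgeSet)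
    {f : Sym2 Pt} {p : T.Walk u v} (hp : p.IsPath) (hf : f ∈ p.edges) :
    edgeLen f ≤ edgeLen s(u,v) := by
  classical
  obtain ⟨⟨hTV, hTac, hTconn⟩, hTmin⟩ := hT
  induction f with
  | _ f1 f2 =>
  have hfE : s(f1, f2) ∈ T.edgeSet := p.edges_subset_edgeSet hf
  have hfadj : T.Adj f1 f2 := hfE
  have hf1V : f1 ∈ V := (hTV hfadj).1
  have hf2V : f2 ∈ V := (hTV hfadj).2
  set K := T.deleteEdges {s(f1, f2)} with hK
  have hKle : K ≤ T := SimpleGraph.deleteEdges_le _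
  have hKE : K.edgeSet = T.edgeSet \ {s(f1, f2)} := SimpleGraph.edgeSet_deleteEdges _
  have hKuv : ¬ K.Reachable u v := by
    rintro ⟨w⟩
    have hsub : ∀ e ∈ w.bypass.edges, e ∈ T.edgeSet := by
      intro e hee
      exact ((hKE ▸ w.bypass.edges_subset_edgeSet hee)).1
    have hq : (w.bypass.transfer T hsub).IsPath := (w.bypass_isPath).transfer _
    have hqe : s(f1, f2) ∉ (w.bypass.transfer T hsub).edges := by
      rw [SimpleGraph.Walk.edges_transfer]
      intro hmem
      have := hKE ▸ w.bypass.edges_subset_edgeSet hmem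
      exact this.2 rfl
    have h1 := path_eq_thePath hTac ⟨p⟩ p hp
    have h2 := path_eq_thePath hTac ⟨p⟩ (w.bypass.transfer T hsub) hq
    rw [h1, ← h2] at hf
    exact hqe hf
  have hQ : ∀ c ∈ V, K.Reachable c u ∨ K.Reachable c v := by
    intro c hc
    have hcu : T.Reachable c u := hTconn c hc u hu
    rcases reachable_delete_cases T (a := f1) (b := f2) hcu with h | ⟨h1, h2⟩ | ⟨h1, h2⟩
    · exact Or.inl h
    · rcases reachable_delete_cases T (a := f1) (b := f2) (hTconn f1 hf1V v hv) with
        h' | ⟨h1', h2'⟩ | ⟨h1', h2'⟩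
      · exact Or.inr (h1.trans h')
      · exact absurd (h2.symm.trans h2') hKuv
      · exact Or.inr (h1.trans h2')
    · rcases reachable_delete_cases T (a := f1) (b := f2) (hTconn f2 hf2V v hv) with
        h' | ⟨h1', h2'⟩ | ⟨h1', h2'⟩
      · exact Or.inr (h1.trans h')
      · exact Or.inr (h1.trans h2')
      · exact absurd (h2.symm.trans h2') hKuv
  set T' := SimpleGraph.fromEdgeSet (insert s(u,v) (T.edgeSet \ {s(f1, f2)})) with hT'
  have hT'E : T'.edgeSet = insert s(u,v) (T.edgeSet \ {s(f1, f2)}) := by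
    apply edgeSet_fromEdgeSet_of_nodiag
    intro x hx
    rcases Set.mem_insert_iff.1 hx with rfl | hx
    · simpa using huv
    · exact T.not_isDiag_of_mem_edgeSet hx.1
  have hKT' : K ≤ T' := by
    rw [← SimpleGraph.edgeSet_subset_edgeSet, hKE, hT'E]
    exact Set.subset_insert _ _
  have hT'ac : T'.IsAcyclic := by
    have := acyclic_insert_edge (G := K) (acyclic_mono hKle hTac) huv hKuv
    rwa [hKE] at this
  have hT'V : ∀ ⦃x y : Pt⦄, T'.Adj x y → x ∈ (V : Set Pt) ∧ y ∈ (V : Set Pt) := by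
    intro x y hxy
    have : s(x, y) ∈ T'.edgeSet := hxy
    rw [hT'E] at this
    rcases Set.mem_insert_iff.1 this with hEq | hmem
    · rcases Sym2.eq_iff.1 hEq with ⟨rfl, rfl⟩ | ⟨rfl, rfl⟩
      · exact ⟨hu, hv⟩
      · exact ⟨hv, hu⟩
    · exact hTV hmem.1
  have hT'uv : T'.Reachable u v := by
    refine SimpleGraph.Adj.reachable ?_
    show s(u, v) ∈ T'.edgeSet
    rw [hT'E]; exact Set.mem_insert _ _
  have hT'conn : ∀ x ∈ (V : Set Pt), ∀ y ∈ (V : Set Pt), T'.Reachable x y := by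
    intro x hx y hy
    have hx' := hQ x hx
    have hy' := hQ y hy
    rcases hx' with h | h <;> rcases hy' with h' | h'
    · exact (h.mono hKT').trans (h'.mono hKT').symm
    · exact ((h.mono hKT').trans hT'uv).trans (h'.mono hKT').symm
    · exact ((h.mono hKT').trans hT'uv.symm).trans (h'.mono hKT').symm
    · exact (h.mono hKT').trans (h'.mono hKT').symm
  have hT'span : IsSpanningTreeOn ↑V T' := ⟨hT'V, hT'ac, hT'conn⟩
  have hfinT : T.edgeSet.Finite := edgeSet_finite_of_mem (V := V) hTV
  have hlen : glength T' = glength T - edgeLen s(f1, f2) + edgeLen s(u,v) :=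
    glength_swap hfinT hfE he (by simpa using huv)
  have := hTmin T' hT'span
  rw [hlen] at this
  linarith

end MSTAux
namespace MSTAux
open SimpleGraph

section Main

variable {V : Finset Pt} {T : SimpleGraph Pt} {N : Finset Pt}
  {B : Set (Sym2 Pt)} {F : SimpleGraph Pt}

lemma btl_exists (hT : IsMSTOn ↑V T) {x y : Pt} (hx : x ∈ V) (hy : y ∈ V) (hxy : x ≠ y) :
    ∃ e, BottleneckEdge T x y e := by
  classical
  obtain ⟨⟨hTV, hTac, hTconn⟩, -⟩ := hT
  have hr : T.Reachable x y := hTconn x hx y hy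
  set p := thePath T hr with hp
  have hpp : p.IsPath := thePath_isPath T hr
  have hne : p.edges.toFinset.Nonempty := by
    rw [Finset.nonempty_iff_ne_empty]
    intro h0
    have : p.edges = [] := by
      simpa using congrArg Finset.val h0
    have hlen : p.length = 0 := by
      rw [← SimpleGraph.Walk.length_edges, this]; rfl
    exact hxy (SimpleGraph.Walk.eq_of_length_eq_zero hlen)
  obtain ⟨e, heS, hemax⟩ := Finset.exists_max_image p.edges.toFinset edgeLen hne
  rw [List.mem_toFinset] at heS
  refine ⟨e, p.edges_subset_edgeSet heS, ?_⟩
  intro q hq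
  rw [path_eq_thePath hTac hr q hq, ← hp]
  refine ⟨heS, fun f hf => hemax f (List.mem_toFinset.2 hf)⟩

lemma B_subset (hB : B = { e | ∃ x ∈ N, ∃ y ∈ N, x ≠ y ∧ BottleneckEdge T x y e }) :
    B ⊆ T.edgeSet := by
  subst hB
  rintro e ⟨x, hx, y, hy, hxy, heT, -⟩
  exact heT

lemma F_edgeSet (hB : B = { e | ∃ x ∈ N, ∃ y ∈ N, x ≠ y ∧ BottleneckEdge T x y e })
    (hF : F = SimpleGraph.fromEdgeSet (T.edgeSet \ B)) :
    F.edgeSet = T.edgeSet \ B := by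
  subst hF
  exact edgeSet_fromEdgeSet_of_nodiag (fun e he => T.not_isDiag_of_mem_edgeSet he.1)

lemma F_le_T (hB : B = { e | ∃ x ∈ N, ∃ y ∈ N, x ≠ y ∧ BottleneckEdge T x y e })
    (hF : F = SimpleGraph.fromEdgeSet (T.edgeSet \ B)) : F ≤ T := by
  rw [← SimpleGraph.edgeSet_subset_edgeSet, F_edgeSet hB hF]
  exact Set.diff_subset

lemma part2_FV (hT : IsMSTOn ↑V T)
    (hB : B = { e | ∃ x ∈ N, ∃ y ∈ N, x ≠ y ∧ BottleneckEdge T x y e })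
    (hF : F = SimpleGraph.fromEdgeSet (T.edgeSet \ B)) :
    ∀ ⦃x y : Pt⦄, F.Adj x y → x ∈ V ∧ y ∈ V := by
  intro x y hxy
  exact hT.1.1 (F_le_T hB hF hxy)

lemma part2_Fac (hT : IsMSTOn ↑V T)
    (hB : B = { e | ∃ x ∈ N, ∃ y ∈ N, x ≠ y ∧ BottleneckEdge T x y e })
    (hF : F = SimpleGraph.fromEdgeSet (T.edgeSet \ B)) : F.IsAcyclic :=
  acyclic_mono (F_le_T hB hF) hT.1.2.1

lemma part2_unique (hT : IsMSTOn ↑V T) (hNV : N ⊆ V)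
    (hB : B = { e | ∃ x ∈ N, ∃ y ∈ N, x ≠ y ∧ BottleneckEdge T x y e })
    (hF : F = SimpleGraph.fromEdgeSet (T.edgeSet \ B)) :
    ∀ x ∈ N, ∀ y ∈ N, F.Reachable x y → x = y := by
  intro x hx y hy hr
  by_contra hxy
  obtain ⟨e, hbtl⟩ := btl_exists hT (hNV hx) (hNV hy) hxy
  have heB : e ∈ B := by
    rw [hB]; exact ⟨x, hx, y, hy, hxy, hbtl⟩
  set q := thePath F hr with hq
  have hqp : q.IsPath := thePath_isPath F hr
  have hsub : ∀ f ∈ q.edges, f ∈ T.edgeSet :=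
    fun f hf => ((F_edgeSet hB hF) ▸ q.edges_subset_edgeSet hf).1
  have hqT : (q.transfer T hsub).IsPath := hqp.transfer _
  have := (hbtl.2 (q.transfer T hsub) hqT).1
  rw [SimpleGraph.Walk.edges_transfer] at this
  exact ((F_edgeSet hB hF) ▸ q.edges_subset_edgeSet this).2 heB

lemma part2_reach (hT : IsMSTOn ↑V T) (hdist : DistinctEdgeLengths T)
    (hNV : N ⊆ V) (hN : N.Nonempty)
    (hB : B = { e | ∃ x ∈ N, ∃ y ∈ N, x ≠ y ∧ BottleneckEdge T x y e })
    (hF : F = SimpleGraph.fromEdgeSet (T.edgeSet \ B)) :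
    ∀ v ∈ V, ∃ x ∈ N, F.Reachable v x := by
  classical
  obtain ⟨⟨hTV, hTac, hTconn⟩, -⟩ := hT
  intro v hv
  set φ : Pt → ℝ := fun x =>
    if h : T.Reachable v x then
      (insert (0:ℝ) (((thePath T h).edges.toFinset.filter (· ∈ B)).image edgeLen)).max'
        (Finset.insert_nonempty _ _)
    else 0 with hφ
  obtain ⟨x, hxN, hmin⟩ := Finset.exists_min_image N φ hN
  have hr : T.Reachable v x := hTconn v hv x (hNV hxN)
  set p := thePath T hr with hp
  have hpp : p.IsPath := thePath_isPath T hr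
  set S := p.edges.toFinset.filter (· ∈ B) with hS
  by_cases hSe : S = ∅
  · -- the path avoids B, so it is an F-path
    refine ⟨x, hxN, ?_⟩
    have hsub : ∀ f ∈ p.edges, f ∈ F.edgeSet := by
      intro f hf
      rw [F_edgeSet hB hF]
      refine ⟨p.edges_subset_edgeSet hf, ?_⟩
      intro hfB
      have : f ∈ S := by
        rw [hS, Finset.mem_filter, List.mem_toFinset]
        exact ⟨hf, hfB⟩
      rw [hSe] at this
      simp at this
    exact ⟨p.transfer F hsub⟩
  · exfalso
    have hSne : S.Nonempty := Finset.nonempty_iff_ne_empty.2 hSe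
    set M : ℝ := (insert (0:ℝ) (S.image edgeLen)).max' (Finset.insert_nonempty _ _) with hM
    have hφx : φ x = M := by
      rw [hφ]; simp only; rw [dif_pos hr]
    have hle_M : ∀ f ∈ S, edgeLen f ≤ M :=
      fun f hf => Finset.le_max' _ _ (Finset.mem_insert_of_mem (Finset.mem_image_of_mem _ hf))
    have hMmem := Finset.max'_mem (insert (0:ℝ) (S.image edgeLen)) (Finset.insert_nonempty _ _)
    rw [← hM, Finset.mem_insert] at hMmem
    obtain ⟨g, hgS, hgM⟩ : ∃ g ∈ S, edgeLen g = M := by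
      rcases hMmem with h0 | himg
      · obtain ⟨g, hgS⟩ := hSne
        have hpos : 0 < edgeLen g :=
          edgeLen_pos (p.edges_subset_edgeSet (List.mem_toFinset.1 (Finset.mem_filter.1 hgS).1))
        have := hle_M g hgS
        rw [h0] at this
        linarith
      · obtain ⟨g, hgS, hgM⟩ := Finset.mem_image.1 himg
        exact ⟨g, hgS, hgM⟩
    have hMpos : 0 < M := by
      rw [← hgM]
      exact edgeLen_pos (p.edges_subset_edgeSet (List.mem_toFinset.1 (Finset.mem_filter.1 hgS).1))
    have hgp : g ∈ p.edges := List.mem_toFinset.1 (Finset.mem_filter.1 hgS).1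
    have hgB : g ∈ B := by
      have := (Finset.mem_filter.1 hgS).2
      simpa using this
    have hgT : g ∈ T.edgeSet := p.edges_subset_edgeSet hgp
    obtain ⟨a, haN, b, hbN, hab, hbtl⟩ : ∃ a ∈ N, ∃ b ∈ N, a ≠ b ∧ BottleneckEdge T a b g := by
      rw [hB] at hgB; exact hgB
    obtain ⟨⟨g1, g2⟩, hgrep⟩ := Quot.exists_rep g
    have hgrep' : s(g1, g2) = g := hgrep
    have hrab : T.Reachable a b := hTconn a (hNV haN) b (hNV hbN)
    set pb := thePath T hrab with hpb
    have hpbp : pb.IsPath := thePath_isPath T hrab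
    obtain ⟨hgpb, hmaxb⟩ := hbtl.2 pb hpbp
    -- key: any walk from v to a point of N whose B-edges are all < M gives contradiction
    have key : ∀ (t : Pt), t ∈ N → ∀ (W : T.Walk v t),
        (∀ f ∈ W.edges, f ∈ B → edgeLen f < M) → False := by
      intro t htN W hW
      have hrt : T.Reachable v t := ⟨W⟩
      have hbyp : W.bypass = thePath T hrt :=
        path_eq_thePath hTac hrt W.bypass W.bypass_isPath
      have hφt : φ t < M := by
        rw [hφ]; simp only; rw [dif_pos hrt]
        apply Finset.max'_lt_iff _ (Finset.insert_nonempty _ _) |>.2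
        intro y hy
        rcases Finset.mem_insert.1 hy with rfl | himg
        · exact hMpos
        · obtain ⟨f, hfS, rfl⟩ := Finset.mem_image.1 himg
          rw [Finset.mem_filter, List.mem_toFinset] at hfS
          have hfW : f ∈ W.edges := W.edges_bypass_subset (hbyp ▸ hfS.1)
          exact hW f hfW (by simpa using hfS.2)
      have := hmin t htN
      rw [hφx] at this
      linarith
    -- bound for edges in the two relevant paths, distinct from g
    have bnd : ∀ f : Sym2 Pt, f ≠ g → (f ∈ p.edges ∨ f ∈ pb.edges) → f ∈ B → edgeLen f < M := by
      intro f hfg hmem hfB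
      have hfT : f ∈ T.edgeSet := by
        rcases hmem with h | h
        exacts [p.edges_subset_edgeSet h, pb.edges_subset_edgeSet h]
      have hfle : edgeLen f ≤ M := by
        rcases hmem with h | h
        · exact hle_M f (by rw [hS, Finset.mem_filter, List.mem_toFinset]; exact ⟨h, by simpa using hfB⟩)
        · rw [← hgM]; exact hmaxb f h
      rcases lt_or_eq_of_le hfle with h | h
      · exact h
      · exact absurd (hdist f hfT g hgT (by rw [h, hgM])) hfg
    -- split both paths at g
    rcases walk_split p hpp (hgrep' ▸ hgp) with ⟨w1, w2, ⟨e1, s1⟩, ⟨e2, s2⟩⟩ | ⟨w1, w2, ⟨e1, s1⟩, ⟨e2, s2⟩⟩ <;>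
      rcases walk_split pb hpbp (hgrep' ▸ hgpb) with ⟨u1, u2, ⟨e1', s1'⟩, ⟨e2', s2'⟩⟩ | ⟨u1, u2, ⟨e1', s1'⟩, ⟨e2', s2'⟩⟩
    · -- w1 : v → g1, u1 : a → g1 ⇒ walk v → a
      refine key a haN (w1.append u1.reverse) ?_
      intro f hf hfB
      rw [SimpleGraph.Walk.edges_append, List.mem_append] at hf
      rcases hf with h | h
      · exact bnd f (fun hEq => e1 (by rw [← hEq] at hgrep'; exact hgrep' ▸ h)) (Or.inl (s1 f h)) hfB
      · rw [SimpleGraph.Walk.edges_reverse, List.mem_reverse] at h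
        exact bnd f (fun hEq => e1' (by rw [← hEq] at hgrep'; exact hgrep' ▸ h)) (Or.inr (s1' f h)) hfB
    · -- w1 : v → g1, u2 : g1 → b ⇒ walk v → b  (u2 : here split is (a→g2, g1→b))
      refine key b hbN (w1.append u2) ?_
      intro f hf hfB
      rw [SimpleGraph.Walk.edges_append, List.mem_append] at hf
      rcases hf with h | h
      · exact bnd f (fun hEq => e1 (by rw [← hEq] at hgrep'; exact hgrep' ▸ h)) (Or.inl (s1 f h)) hfB
      · exact bnd f (fun hEq => e2' (by rw [← hEq] at hgrep'; exact hgrep' ▸ h)) (Or.inr (s2' f h)) hfB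
    · -- w1 : v → g2, u2 : g2 → b
      refine key b hbN (w1.append u2) ?_
      intro f hf hfB
      rw [SimpleGraph.Walk.edges_append, List.mem_append] at hf
      rcases hf with h | h
      · exact bnd f (fun hEq => e1 (by rw [← hEq] at hgrep'; exact hgrep' ▸ h)) (Or.inl (s1 f h)) hfB
      · exact bnd f (fun hEq => e2' (by rw [← hEq] at hgrep'; exact hgrep' ▸ h)) (Or.inr (s2' f h)) hfB
    · -- w1 : v → g2, u1 : a → g2
      refine key a haN (w1.append u1.reverse) ?_
      intro f hf hfB
      rw [SimpleGraph.Walk.edges_append, List.mem_append] at hf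
      rcases hf with h | h
      · exact bnd f (fun hEq => e1 (by rw [← hEq] at hgrep'; exact hgrep' ▸ h)) (Or.inl (s1 f h)) hfB
      · rw [SimpleGraph.Walk.edges_reverse, List.mem_reverse] at h
        exact bnd f (fun hEq => e1' (by rw [← hEq] at hgrep'; exact hgrep' ▸ h)) (Or.inr (s1' f h)) hfB

end Main
end MSTAux
namespace MSTAux
open SimpleGraph

section Main2

variable {V : Finset Pt} {T : SimpleGraph Pt} {N : Finset Pt}
  {B : Set (Sym2 Pt)} {F : SimpleGraph Pt}

lemma T_count (hT : IsMSTOn ↑V T) (hNV : N ⊆ V) (hN : N.Nonempty) :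
    T.edgeSet.ncard + 1 = V.card := by
  classical
  obtain ⟨x₀, hx₀⟩ := hN
  have := forest_count V T.edgeSet.ncard T {x₀} hT.1.2.1 hT.1.1
    (Finset.singleton_subset_iff.2 (hNV hx₀))
    (fun v hv => ⟨x₀, Finset.mem_singleton_self _, hT.1.2.2 v hv x₀ (hNV hx₀)⟩)
    (fun x hx y hy _ => by
      rw [Finset.mem_singleton] at hx hy; rw [hx, hy]) rfl
  simpa using this

lemma F_count (hT : IsMSTOn ↑V T) (hdist : DistinctEdgeLengths T) (hNV : N ⊆ V) (hN : N.Nonempty)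
    (hB : B = { e | ∃ x ∈ N, ∃ y ∈ N, x ≠ y ∧ BottleneckEdge T x y e })
    (hF : F = SimpleGraph.fromEdgeSet (T.edgeSet \ B)) :
    F.edgeSet.ncard + N.card = V.card :=
  forest_count V F.edgeSet.ncard F N (part2_Fac hT hB hF) (part2_FV hT hB hF) hNV
    (part2_reach hT hdist hNV hN hB hF) (part2_unique hT hNV hB hF) rfl

lemma B_count (hT : IsMSTOn ↑V T) (hdist : DistinctEdgeLengths T) (hNV : N ⊆ V) (hN : N.Nonempty)
    (hB : B = { e | ∃ x ∈ N, ∃ y ∈ N, x ≠ y ∧ BottleneckEdge T x y e })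
    (hF : F = SimpleGraph.fromEdgeSet (T.edgeSet \ B)) :
    B.ncard = N.card - 1 := by
  classical
  have hTfin : T.edgeSet.Finite := edgeSet_finite_of_mem (V := V) hT.1.1
  have hFE := F_edgeSet hB hF
  have hBsub := B_subset (T := T) hB
  have hunion : T.edgeSet = B ∪ F.edgeSet := by
    rw [hFE]
    rw [Set.union_diff_cancel' (le_refl _) hBsub]
  have hdisj : Disjoint B F.edgeSet := by
    rw [hFE]
    exact Set.disjoint_sdiff_right.mono_left (le_refl _)
  have hcard : T.edgeSet.ncard = B.ncard + F.edgeSet.ncard := by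
    rw [hunion]
    exact Set.ncard_union_eq hdisj (hTfin.subset hBsub) (hTfin.subset (hFE ▸ Set.diff_subset))
  have h1 := T_count hT hNV hN
  have h2 := F_count hT hdist hNV hN hB hF
  have hk : 1 ≤ N.card := hN.card_pos
  omega

end Main2
end MSTAux
namespace MSTAux
open SimpleGraph

section Main3

variable {V : Finset Pt} {T : SimpleGraph Pt} {N : Finset Pt}
  {B : Set (Sym2 Pt)} {F : SimpleGraph Pt}

lemma exchange (hT : IsMSTOn ↑V T) (hdist : DistinctEdgeLengths T) (hNV : N ⊆ V) (hN : N.Nonempty)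
    (hB : B = { e | ∃ x ∈ N, ∃ y ∈ N, x ≠ y ∧ BottleneckEdge T x y e })
    (hF : F = SimpleGraph.fromEdgeSet (T.edgeSet \ B))
    (H : SimpleGraph Pt)
    (hHV : ∀ ⦃x y : Pt⦄, H.Adj x y → x ∈ V ∧ y ∈ V) (hHac : H.IsAcyclic)
    (hH1 : ∀ v ∈ V, ∃ x ∈ N, H.Reachable v x)
    (hH2 : ∀ x ∈ N, ∀ y ∈ N, H.Reachable x y → x = y)
    {e : Sym2 Pt} (heH : e ∈ H.edgeSet) (heF : e ∉ F.edgeSet) :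
    ∃ H' : SimpleGraph Pt,
      (∀ ⦃x y : Pt⦄, H'.Adj x y → x ∈ V ∧ y ∈ V) ∧ H'.IsAcyclic ∧
      (∀ v ∈ V, ∃ x ∈ N, H'.Reachable v x) ∧
      (∀ x ∈ N, ∀ y ∈ N, H'.Reachable x y → x = y) ∧
      (glength H' < glength H ∨
        (glength H' = glength H ∧
          ((H'.edgeSet \ F.edgeSet).ncard < (H.edgeSet \ F.edgeSet).ncard ∨
           ((H'.edgeSet \ F.edgeSet).ncard = (H.edgeSet \ F.edgeSet).ncard ∧
            (H'.edgeSet \ T.edgeSet).ncard < (H.edgeSet \ T.edgeSet).ncard)))) := by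
  classical
  obtain ⟨⟨u, v⟩, hrep⟩ := Quot.exists_rep e
  have hrep' : s(u,v) = e := hrep
  subst hrep'
  have hadj : H.Adj u v := heH
  have huv : u ≠ v := hadj.ne
  have huV : u ∈ V := (hHV hadj).1
  have hvV : v ∈ V := (hHV hadj).2
  set K := H.deleteEdges {s(u,v)} with hK
  have hKE : K.edgeSet = H.edgeSet \ {s(u,v)} := SimpleGraph.edgeSet_deleteEdges _
  have hKle : K ≤ H := SimpleGraph.deleteEdges_le _
  have hbr : ¬ K.Reachable u v := not_reachable_delete_of_acyclic hHac hadj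
  obtain ⟨x₁, hx₁N, hux₁⟩ := hH1 u huV
  obtain ⟨d, d', hsym, hd'x₁⟩ : ∃ d d' : Pt, s(d, d') = s(u, v) ∧ K.Reachable d' x₁ := by
    rcases reachable_delete_cases H (a := u) (b := v) hux₁ with h | ⟨_, h⟩ | ⟨h, _⟩
    · exact ⟨v, u, Sym2.eq_swap, h⟩
    · exact ⟨u, v, rfl, h⟩
    · exact absurd h hbr
  have hab : (d = u ∧ d' = v) ∨ (d = v ∧ d' = u) := Sym2.eq_iff.mp hsym
  have hadj' : H.Adj d d' := by rw [← SimpleGraph.mem_edgeSet, hsym]; exact heH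
  have hdd' : d ≠ d' := hadj'.ne
  have hdV : d ∈ V := (hHV hadj').1
  have hd'V : d' ∈ V := (hHV hadj').2
  have hnr' : ¬ K.Reachable d d' := by
    rcases hab with ⟨rfl, rfl⟩ | ⟨rfl, rfl⟩
    · exact hbr
    · exact fun h => hbr h.symm
  have hdless : ∀ z ∈ N, ¬ K.Reachable d z := by
    intro z hz hreach
    have hzx₁ : H.Reachable z x₁ :=
      (hreach.mono hKle).symm.trans (hadj'.reachable.trans (hd'x₁.mono hKle))
    have hzeq := hH2 z hz x₁ hx₁N hzx₁
    subst hzeq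
    exact hnr' (hreach.trans hd'x₁.symm)
  have hcased : ∀ s : Pt, (s = u ∨ s = v) → s = d ∨ s = d' := by
    rcases hab with ⟨rfl, rfl⟩ | ⟨rfl, rfl⟩ <;> tauto
  have claimStar : ∀ w ∈ V, K.Reachable w d ∨ ∃ x ∈ N, K.Reachable w x := by
    intro w hw
    obtain ⟨x, hxN, hwx⟩ := hH1 w hw
    rcases reachable_delete_cases H (a := u) (b := v) hwx with h | ⟨h1, _⟩ | ⟨h1, _⟩
    · exact Or.inr ⟨x, hxN, h⟩
    · rcases hcased u (Or.inl rfl) with hEq | hEq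
      · refine Or.inl ?_; rw [← hEq]; exact h1
      · refine Or.inr ⟨x₁, hx₁N, Reachable.trans ?_ hd'x₁⟩; rw [← hEq]; exact h1
    · rcases hcased v (Or.inr rfl) with hEq | hEq
      · refine Or.inl ?_; rw [← hEq]; exact h1
      · refine Or.inr ⟨x₁, hx₁N, Reachable.trans ?_ hd'x₁⟩; rw [← hEq]; exact h1
  obtain ⟨t, W, htK, hbound, hcase2⟩ :
      ∃ (t : Pt) (W : T.Walk d t), (¬ K.Reachable d t) ∧
        (∀ f ∈ W.edges, edgeLen f ≤ edgeLen s(u,v) ∧ f ≠ s(u,v)) ∧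
        (s(u,v) ∉ T.edgeSet ∨ ∀ f ∈ W.edges, edgeLen f < edgeLen s(u,v)) := by
    by_cases heT : s(u,v) ∈ T.edgeSet
    · have heB : s(u,v) ∈ B := by
        have hFE := F_edgeSet hB hF
        by_contra hnB
        exact heF (hFE ▸ ⟨heT, hnB⟩)
      obtain ⟨a, haN, b, hbN, hab', hbtl⟩ :
          ∃ a ∈ N, ∃ b ∈ N, a ≠ b ∧ BottleneckEdge T a b s(u,v) := by
        rw [hB] at heB; exact heB
      have hrab : T.Reachable a b := hT.1.2.2 a (hNV haN) b (hNV hbN)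
      set pb := thePath T hrab with hpb
      have hpbp : pb.IsPath := thePath_isPath T hrab
      obtain ⟨hepb, hmaxb⟩ := hbtl.2 pb hpbp
      have hbnd : ∀ f ∈ pb.edges, f ≠ s(u,v) → edgeLen f < edgeLen s(u,v) := by
        intro f hf hne
        rcases lt_or_eq_of_le (hmaxb f hf) with h | h
        · exact h
        · exact absurd (hdist f (pb.edges_subset_edgeSet hf) s(u,v) heT h) hne
      rcases walk_split pb hpbp hepb with ⟨w1, w2, ⟨e1, s1⟩, ⟨e2, s2⟩⟩ | ⟨w1, w2, ⟨e1, s1⟩, ⟨e2, s2⟩⟩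
      · -- w1 : a → u, w2 : v → b
        rcases hab with ⟨rfl, rfl⟩ | ⟨rfl, rfl⟩
        · -- d = u : take W := w1.reverse : u → a
          refine ⟨a, w1.reverse, hdless a haN, ?_, Or.inr ?_⟩
          · intro f hf
            rw [SimpleGraph.Walk.edges_reverse, List.mem_reverse] at hf
            exact ⟨(hmaxb f (s1 f hf)), fun hEq => e1 (hEq ▸ hf)⟩
          · intro f hf
            rw [SimpleGraph.Walk.edges_reverse, List.mem_reverse] at hf
            exact hbnd f (s1 f hf) (fun hEq => e1 (hEq ▸ hf))
        · -- d = v : take W := w2 : v → b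
          refine ⟨b, w2, hdless b hbN, ?_, Or.inr ?_⟩
          · intro f hf
            exact ⟨(hmaxb f (s2 f hf)), fun hEq => e2 (hEq ▸ hf)⟩
          · intro f hf
            exact hbnd f (s2 f hf) (fun hEq => e2 (hEq ▸ hf))
      · -- w1 : a → v, w2 : u → b
        rcases hab with ⟨rfl, rfl⟩ | ⟨rfl, rfl⟩
        · -- d = u : take W := w2 : u → b
          refine ⟨b, w2, hdless b hbN, ?_, Or.inr ?_⟩
          · intro f hf
            exact ⟨(hmaxb f (s2 f hf)), fun hEq => e2 (hEq ▸ hf)⟩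
          · intro f hf
            exact hbnd f (s2 f hf) (fun hEq => e2 (hEq ▸ hf))
        · -- d = v : take W := w1.reverse : v → a
          refine ⟨a, w1.reverse, hdless a haN, ?_, Or.inr ?_⟩
          · intro f hf
            rw [SimpleGraph.Walk.edges_reverse, List.mem_reverse] at hf
            exact ⟨(hmaxb f (s1 f hf)), fun hEq => e1 (hEq ▸ hf)⟩
          · intro f hf
            rw [SimpleGraph.Walk.edges_reverse, List.mem_reverse] at hf
            exact hbnd f (s1 f hf) (fun hEq => e1 (hEq ▸ hf))
    · have hdrT : T.Reachable d d' := hT.1.2.2 d hdV d' hd'V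
      refine ⟨d', thePath T hdrT, hnr', ?_, Or.inl heT⟩
      intro f hf
      have hfT : f ∈ T.edgeSet := (thePath T hdrT).edges_subset_edgeSet hf
      refine ⟨?_, fun hEq => heT (hEq ▸ hfT)⟩
      rcases hab with ⟨rfl, rfl⟩ | ⟨rfl, rfl⟩
      · exact cycle_property hT huV hvV huv heT (thePath_isPath T hdrT) hf
      · have := cycle_property hT hvV huV (Ne.symm huv) (by rwa [Sym2.eq_swap])
          (thePath_isPath T hdrT) hf
        rwa [Sym2.eq_swap]
  obtain ⟨p₁, q₁, hfW, hKdp₁, hKdq₁⟩ := exists_crossing_edge W htK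
  have hfT : s(p₁,q₁) ∈ T.edgeSet := W.edges_subset_edgeSet hfW
  have hadjT : T.Adj p₁ q₁ := hfT
  have hp₁q₁ : p₁ ≠ q₁ := hadjT.ne
  have hp₁V : p₁ ∈ V := (hT.1.1 hfT).1
  have hq₁V : q₁ ∈ V := (hT.1.1 hfT).2
  have hflen : edgeLen s(p₁,q₁) ≤ edgeLen s(u,v) := (hbound _ hfW).1
  have hfne : s(p₁,q₁) ≠ s(u,v) := (hbound _ hfW).2
  have hfH : s(p₁,q₁) ∉ H.edgeSet := by
    intro hmem
    have hmemK : s(p₁,q₁) ∈ K.edgeSet := by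
      rw [hKE]; exact ⟨hmem, by simpa using hfne⟩
    exact hKdq₁ (hKdp₁.trans (SimpleGraph.Adj.reachable hmemK))
  have hKp₁q₁ : ¬ K.Reachable p₁ q₁ := fun h => hKdq₁ (hKdp₁.trans h)
  set H' := SimpleGraph.fromEdgeSet (insert s(p₁,q₁) (H.edgeSet \ {s(u,v)})) with hH'
  have hH'E : H'.edgeSet = insert s(p₁,q₁) (H.edgeSet \ {s(u,v)}) := by
    apply edgeSet_fromEdgeSet_of_nodiag
    intro x hx
    rcases Set.mem_insert_iff.1 hx with rfl | hx
    · simpa using hp₁q₁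
    · exact H.not_isDiag_of_mem_edgeSet hx.1
  have hKH' : K ≤ H' := by
    rw [← SimpleGraph.edgeSet_subset_edgeSet, hKE, hH'E]; exact Set.subset_insert _ _
  have hH'V : ∀ ⦃x y : Pt⦄, H'.Adj x y → x ∈ V ∧ y ∈ V := by
    intro x y hxy
    have hmem : s(x,y) ∈ H'.edgeSet := hxy
    rw [hH'E] at hmem
    rcases Set.mem_insert_iff.1 hmem with hEq | hmem
    · rcases Sym2.eq_iff.1 hEq with ⟨rfl, rfl⟩ | ⟨rfl, rfl⟩
      · exact ⟨hp₁V, hq₁V⟩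
      · exact ⟨hq₁V, hp₁V⟩
    · exact hHV hmem.1
  have hH'ac : H'.IsAcyclic := by
    have := acyclic_insert_edge (G := K) (acyclic_mono hKle hHac) hp₁q₁ hKp₁q₁
    rwa [hKE] at this
  have hH'adj : H'.Adj p₁ q₁ := by
    rw [← SimpleGraph.mem_edgeSet, hH'E]; exact Set.mem_insert _ _
  have hq₁reach : ∃ x ∈ N, K.Reachable q₁ x := by
    rcases claimStar q₁ hq₁V with h | h
    · exact absurd h.symm hKdq₁
    · exact h
  have hH'1 : ∀ w ∈ V, ∃ x ∈ N, H'.Reachable w x := by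
    intro w hw
    rcases claimStar w hw with h | ⟨x, hxN, h⟩
    · obtain ⟨x₂, hx₂N, h₂⟩ := hq₁reach
      exact ⟨x₂, hx₂N, (((h.trans hKdp₁).mono hKH').trans hH'adj.reachable).trans (h₂.mono hKH')⟩
    · exact ⟨x, hxN, h.mono hKH'⟩
  have hH'2 : ∀ x ∈ N, ∀ y ∈ N, H'.Reachable x y → x = y := by
    intro x hxN y hyN hr
    set q := thePath H' hr with hq
    have hqp : q.IsPath := thePath_isPath H' hr
    have hsubK : ∀ (L : List (Sym2 Pt)), (∀ f ∈ L, f ∈ q.edges) → (s(p₁,q₁) ∉ L) →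
        ∀ f ∈ L, f ∈ K.edgeSet := by
      intro L hL hnot f hf
      have hmem : f ∈ H'.edgeSet := q.edges_subset_edgeSet (hL f hf)
      rw [hH'E] at hmem
      rcases Set.mem_insert_iff.1 hmem with rfl | hmem
      · exact absurd hf hnot
      · rw [hKE]; exact hmem
    by_cases hfq : s(p₁,q₁) ∈ q.edges
    · exfalso
      rcases walk_split q hqp hfq with ⟨w1, w2, ⟨e1, s1⟩, ⟨e2, s2⟩⟩ | ⟨w1, w2, ⟨e1, s1⟩, ⟨e2, s2⟩⟩
      · have hx : K.Reachable x p₁ := ⟨w1.transfer K (fun f hf => hsubK w1.edges s1 e1 f hf)⟩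
        exact hdless x hxN (hKdp₁.trans hx.symm)
      · have hy : K.Reachable p₁ y := ⟨w2.transfer K (fun f hf => hsubK w2.edges s2 e2 f hf)⟩
        exact hdless y hyN (hKdp₁.trans hy)
    · have hsub : ∀ f ∈ q.edges, f ∈ H.edgeSet := by
        intro f hf
        have hmem : f ∈ H'.edgeSet := q.edges_subset_edgeSet hf
        rw [hH'E] at hmem
        rcases Set.mem_insert_iff.1 hmem with rfl | hmem
        · exact absurd hf hfq
        · exact hmem.1
      exact hH2 x hxN y hyN ⟨q.transfer H hsub⟩
  have hfinH : H.edgeSet.Finite := edgeSet_finite_of_mem (V := V) hHV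
  have hglen : glength H' = glength H - edgeLen s(u,v) + edgeLen s(p₁,q₁) :=
    glength_swap hfinH heH hfH (by simpa using hp₁q₁)
  refine ⟨H', hH'V, hH'ac, hH'1, hH'2, ?_⟩
  rcases hcase2 with heT | hstrict
  · rcases lt_or_eq_of_le hflen with hlt | hEq
    · left; rw [hglen]; linarith
    · have hgeq : glength H' = glength H := by rw [hglen, ← hEq]; ring
      right
      refine ⟨hgeq, ?_⟩
      by_cases hfF : s(p₁,q₁) ∈ F.edgeSet
      · left
        have hset : H'.edgeSet \ F.edgeSet = (H.edgeSet \ F.edgeSet) \ {s(u,v)} := by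
          rw [hH'E]; ext z
          simp only [Set.mem_insert_iff, Set.mem_diff, Set.mem_singleton_iff]
          constructor
          · rintro ⟨(rfl | ⟨hzH, hz⟩), hzF⟩
            exacts [absurd hfF hzF, ⟨⟨hzH, hzF⟩, hz⟩]
          · rintro ⟨⟨hzH, hzF⟩, hz⟩
            exact ⟨Or.inr ⟨hzH, hz⟩, hzF⟩
        rw [hset]
        exact Set.ncard_diff_singleton_lt_of_mem ⟨heH, heF⟩ (hfinH.diff)
      · right
        constructor
        · have hset : H'.edgeSet \ F.edgeSet
              = insert s(p₁,q₁) ((H.edgeSet \ F.edgeSet) \ {s(u,v)}) := by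
            rw [hH'E]; ext z
            simp only [Set.mem_insert_iff, Set.mem_diff, Set.mem_singleton_iff]
            constructor
            · rintro ⟨(rfl | ⟨hzH, hz⟩), hzF⟩
              exacts [Or.inl rfl, Or.inr ⟨⟨hzH, hzF⟩, hz⟩]
            · rintro (rfl | ⟨⟨hzH, hzF⟩, hz⟩)
              exacts [⟨Or.inl rfl, hfF⟩, ⟨Or.inr ⟨hzH, hz⟩, hzF⟩]
          have hnotmem : s(p₁,q₁) ∉ (H.edgeSet \ F.edgeSet) \ {s(u,v)} := by
            rintro ⟨⟨h1, -⟩, -⟩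
            exact hfH h1
          have hmemd : s(u,v) ∈ H.edgeSet \ F.edgeSet := ⟨heH, heF⟩
          rw [hset, Set.ncard_insert_of_notMem hnotmem ((hfinH.diff).diff),
            Set.ncard_diff_singleton_of_mem hmemd]
          have hpos : 0 < (H.edgeSet \ F.edgeSet).ncard :=
            Set.ncard_pos (hfinH.diff) |>.2 ⟨_, hmemd⟩
          omega
        · have hset : H'.edgeSet \ T.edgeSet = (H.edgeSet \ T.edgeSet) \ {s(u,v)} := by
            rw [hH'E]; ext z
            simp only [Set.mem_insert_iff, Set.mem_diff, Set.mem_singleton_iff]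
            constructor
            · rintro ⟨(rfl | ⟨hzH, hz⟩), hzT⟩
              exacts [absurd hfT hzT, ⟨⟨hzH, hzT⟩, hz⟩]
            · rintro ⟨⟨hzH, hzT⟩, hz⟩
              exact ⟨Or.inr ⟨hzH, hz⟩, hzT⟩
          rw [hset]
          exact Set.ncard_diff_singleton_lt_of_mem ⟨heH, heT⟩ (hfinH.diff)
  · left
    have := hstrict _ hfW
    rw [hglen]; linarith

end Main3
end MSTAux
open MSTAux SimpleGraph in
theorem stmt8 (V : Finset Pt) (T : SimpleGraph Pt) (hT : IsMSTOn ↑V T)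
    (hdist : DistinctEdgeLengths T)
    (N : Finset Pt) (hNV : N ⊆ V) (hN : N.Nonempty)
    (k : ℕ) (hk : N.card = k)
    (B : Set (Sym2 Pt))
    (hB : B = { e | ∃ x ∈ N, ∃ y ∈ N, x ≠ y ∧ BottleneckEdge T x y e })
    (F : SimpleGraph Pt) (hF : F = SimpleGraph.fromEdgeSet (T.edgeSet \ B)) :
    -- (i) there are exactly `k - 1` bottleneck edges
    B.ncard = k - 1 ∧
    -- (ii) deleting them yields a spanning forest of `V` with exactly `k`
    -- components, each containing exactly one point of `N`
    ((∀ ⦃x y : Pt⦄, F.Adj x y → x ∈ V ∧ y ∈ V) ∧ F.IsAcyclic ∧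
      (∀ v ∈ V, ∃ x ∈ N, F.Reachable v x) ∧
      (∀ x ∈ N, ∀ y ∈ N, F.Reachable x y → x = y)) ∧
    -- (iii) this forest is of minimum total length among all such forests
    (∀ H : SimpleGraph Pt,
      (∀ ⦃x y : Pt⦄, H.Adj x y → x ∈ V ∧ y ∈ V) → H.IsAcyclic →
      (∀ v ∈ V, ∃ x ∈ N, H.Reachable v x) →
      (∀ x ∈ N, ∀ y ∈ N, H.Reachable x y → x = y) →
      glength F ≤ glength H) := by
  classical
  subst hk
  refine ⟨B_count hT hdist hNV hN hB hF,
    ⟨part2_FV hT hB hF, part2_Fac hT hB hF, part2_reach hT hdist hNV hN hB hF,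
      part2_unique hT hNV hB hF⟩, ?_⟩
  intro H hHV hHac hH1 hH2
  set Valid : SimpleGraph Pt → Prop := fun G =>
    (∀ ⦃x y : Pt⦄, G.Adj x y → x ∈ V ∧ y ∈ V) ∧ G.IsAcyclic ∧
    (∀ v ∈ V, ∃ x ∈ N, G.Reachable v x) ∧
    (∀ x ∈ N, ∀ y ∈ N, G.Reachable x y → x = y) with hValid
  have hFvalid : Valid F :=
    ⟨part2_FV hT hB hF, part2_Fac hT hB hF, part2_reach hT hdist hNV hN hB hF,
      part2_unique hT hNV hB hF⟩
  have hfinS : {G : SimpleGraph Pt | Valid G}.Finite := by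
    have hbig : ((fun p : Pt × Pt => s(p.1, p.2)) '' ((V : Set Pt) ×ˢ (V : Set Pt))).Finite :=
      Set.Finite.image _ ((V.finite_toSet).prod V.finite_toSet)
    apply Set.Finite.of_finite_image (f := SimpleGraph.edgeSet)
    · apply Set.Finite.subset hbig.finite_subsets
      rintro s ⟨G, hG, rfl⟩
      intro z hz
      induction z with
      | _ x y =>
        rw [SimpleGraph.mem_edgeSet] at hz
        exact ⟨(x, y), ⟨(hG.1 hz).1, (hG.1 hz).2⟩, rfl⟩
    · intro a _ b _ h
      exact SimpleGraph.edgeSet_injective h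
  set μ : SimpleGraph Pt → ℝ ×ₗ (ℕ ×ₗ ℕ) := fun G =>
    toLex (glength G, toLex ((G.edgeSet \ F.edgeSet).ncard, (G.edgeSet \ T.edgeSet).ncard))
    with hμ
  obtain ⟨H₀, hH₀S, hmin⟩ := Set.exists_min_image {G : SimpleGraph Pt | Valid G} μ hfinS ⟨F, hFvalid⟩
  obtain ⟨h₀V, h₀ac, h₀1, h₀2⟩ := hH₀S
  have hsub : H₀.edgeSet ⊆ F.edgeSet := by
    by_contra hns
    rw [Set.not_subset] at hns
    obtain ⟨e, heH₀, heF⟩ := hns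
    obtain ⟨H', h1, h2, h3, h4, h5⟩ :=
      exchange hT hdist hNV hN hB hF H₀ h₀V h₀ac h₀1 h₀2 heH₀ heF
    have hlt : μ H' < μ H₀ := by
      rw [hμ]
      simp only
      rw [Prod.Lex.lt_iff]
      rcases h5 with h | ⟨hg, h⟩
      · exact Or.inl h
      · refine Or.inr ⟨hg, ?_⟩
        rw [Prod.Lex.lt_iff]
        rcases h with h | ⟨hm, h⟩
        · exact Or.inl h
        · exact Or.inr ⟨hm, h⟩
    have hge := hmin H' ⟨h1, h2, h3, h4⟩
    exact absurd (lt_of_le_of_lt hge hlt) (lt_irrefl _)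
  have hcard : F.edgeSet.ncard ≤ H₀.edgeSet.ncard := by
    have c1 := F_count hT hdist hNV hN hB hF
    have c2 := forest_count V H₀.edgeSet.ncard H₀ N h₀ac h₀V hNV h₀1 h₀2 rfl
    omega
  have hEq : H₀.edgeSet = F.edgeSet :=
    Set.eq_of_subset_of_ncard_le hsub hcard
      (edgeSet_finite_of_mem (V := V) (part2_FV hT hB hF))
  have hH₀F : H₀ = F := SimpleGraph.edgeSet_injective hEq
  have hle := hmin H ⟨hHV, hHac, hH1, hH2⟩
  rw [hH₀F, hμ] at hle
  simp only at hle
  rw [Prod.Lex.le_iff] at hle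
  rcases hle with h | ⟨h, -⟩
  · exact le_of_lt h
  · exact le_of_eq h

end
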